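/- Every pair g₁, g₂ of compatible canonical partial term graphs (i.e., such that {g₁, g₂} has an upper bound) in the partially ordered set of canonical partial term graphs over Σ ordered by ≤⊥r has a least upper bound. -/

import Mathlib

set_option autoImplicit false

namespace TGR

/-- A signature: a type of symbols, each with a finite arity. -/
structure Signature where
  Sym : Type
  ar : Sym → ℕ

/-- The signature `Σ_⊥`: `Σ` extended by a fresh nullary symbol `⊥` (here `none`). -/
def Signature.bot (S : Signature) : Signature where
  Sym := Option S.Sym
  ar := fun o => match o with
    | none => 0
    | some f => S.ar f

/-- A rooted graph over a signature `S` with nodes `N`: a labelling, a successor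
function respecting arities, and a root node. -/
structure TermGraph (S : Signature) (N : Type) where
  lab : N → S.Sym
  suc : (n : N) → Fin (S.ar (lab n)) → N
  root : N

namespace TermGraph

variable {S : Signature} {N M K : Type}

/-- `g.IsPos π n`: `π` is a position (path of successor indices from the root) of node `n`. -/
inductive IsPos (g : TermGraph S N) : List ℕ → N → Prop
  | root : IsPos g [] g.root
  | step {π : List ℕ} {n : N} (h : IsPos g π n) (i : Fin (S.ar (g.lab n))) :
      IsPos g (π ++ [(i : ℕ)]) (g.suc n i)

/-- All nodes are reachable from the root. -/
def Reachable (g : TermGraph S N) : Prop :=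
  ∀ n : N, ∃ π : List ℕ, g.IsPos π n

/-- The set of positions of `g`. -/
def pos (g : TermGraph S N) : Set (List ℕ) :=
  {π | ∃ n : N, g.IsPos π n}

/-- The set of positions of node `n` in `g`. -/
def nodePos (g : TermGraph S N) (n : N) : Set (List ℕ) :=
  {π | g.IsPos π n}

/-- `π ∼_g π'`: `π` and `π'` are positions of the same node. -/
def Aliases (g : TermGraph S N) (π π' : List ℕ) : Prop :=
  ∃ n : N, g.IsPos π n ∧ g.IsPos π' n

/-- A position is acyclic if it passes no node twice. -/
def IsAcyclicPos (g : TermGraph S N) (π : List ℕ) : Prop :=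
  ∀ (π₁ π₂ : List ℕ) (n : N), π₁ <+: π₂ → π₂ <+: π →
    g.IsPos π₁ n → g.IsPos π₂ n → π₁ = π₂

/-- The set of acyclic positions of node `n` in `g`. -/
def nodePosAcy (g : TermGraph S N) (n : N) : Set (List ℕ) :=
  {π | g.IsPos π n ∧ g.IsAcyclicPos π}

/-- The set of acyclic positions of `g`. -/
def posAcy (g : TermGraph S N) : Set (List ℕ) :=
  {π | (∃ n : N, g.IsPos π n) ∧ g.IsAcyclicPos π}

/-- The depth of a node: the minimal length of its positions. -/
noncomputable def depth (g : TermGraph S N) (n : N) : ℕ :=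
  sInf {k : ℕ | ∃ π : List ℕ, g.IsPos π n ∧ π.length = k}

open Classical in
/-- The (unique) node at a position. -/
noncomputable def nodeAt (g : TermGraph S N) (π : List ℕ) : N :=
  if h : ∃ n : N, g.IsPos π n then h.choose else g.root

/-- The label `g(π)` at a position. -/
noncomputable def labAt (g : TermGraph S N) (π : List ℕ) : S.Sym :=
  g.lab (g.nodeAt π)

/-- `Δ`-homomorphism: root, labelling and successor conditions, the latter two
suspended on `Δ`-labelled nodes. -/
structure IsDHom (Δ : Set S.Sym) (g : TermGraph S N) (h : TermGraph S M)
    (φ : N → M) : Prop where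
  root_eq : φ g.root = h.root
  lab_eq : ∀ n : N, g.lab n ∉ Δ → h.lab (φ n) = g.lab n
  suc_eq : ∀ n : N, g.lab n ∉ Δ → ∀ (i : ℕ) (hi : i < S.ar (g.lab n))
      (hi' : i < S.ar (h.lab (φ n))),
      φ (g.suc n ⟨i, hi⟩) = h.suc (φ n) ⟨i, hi'⟩

/-- Rigidity: `Pa_g(n) = Pa_h(φ n)` for all non-`Δ`-labelled nodes `n`. -/
def IsRigid (Δ : Set S.Sym) (g : TermGraph S N) (h : TermGraph S M)
    (φ : N → M) : Prop :=
  ∀ n : N, g.lab n ∉ Δ → g.nodePosAcy n = h.nodePosAcy (φ n)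

/-- Rigid `Δ`-homomorphism. -/
def IsRigidDHom (Δ : Set S.Sym) (g : TermGraph S N) (h : TermGraph S M)
    (φ : N → M) : Prop :=
  IsDHom Δ g h φ ∧ IsRigid Δ g h φ

/-- Isomorphism of term graphs: a homomorphism with an inverse homomorphism. -/
def Iso (g : TermGraph S N) (h : TermGraph S M) : Prop :=
  ∃ (φ : N → M) (ψ : M → N), IsDHom ∅ g h φ ∧ IsDHom ∅ h g ψ ∧
    (∀ n : N, ψ (φ n) = n) ∧ (∀ m : M, φ (ψ m) = m)

/-- A partial term graph (over `Σ_⊥`) is total if no node is labelled `⊥`. -/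
def Total (g : TermGraph S.bot N) : Prop := ∀ n : N, g.lab n ≠ none

/-- Rigid `⊥`-homomorphism between partial term graphs. -/
def IsRigidBotHom (g : TermGraph S.bot N) (h : TermGraph S.bot M)
    (φ : N → M) : Prop :=
  IsRigidDHom ({none} : Set (Option S.Sym)) g h φ

/-- The `⊥`-depth of a partial term graph: the minimal depth of a `⊥`-labelled
node, `ω` (`⊤`) if there is none. -/
noncomputable def botDepth (g : TermGraph S.bot N) : ℕ∞ :=
  sInf {d : ℕ∞ | ∃ n : N, g.lab n = none ∧ (g.depth n : ℕ∞) = d}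

/-- `m` is an acyclic predecessor of `n`: some acyclic position `π ++ [i]` of `n`
has `π` a position of `m`. -/
def acyPred (g : TermGraph S N) (n : N) : Set N :=
  {m | ∃ (π : List ℕ) (i : ℕ), (π ++ [i]) ∈ g.nodePosAcy n ∧ g.IsPos π m}

/-- Retained nodes of the truncation at depth `d`: the least set of nodes
containing all nodes of depth `< d` and closed under acyclic predecessors. -/
inductive Retained (g : TermGraph S N) (d : ℕ) : N → Prop
  | shallow {n : N} : g.depth n < d → Retained g d n
  | pred {n m : N} : Retained g d n → m ∈ g.acyPred n → Retained g d m

theorem not_retained_zero {g : TermGraph S N} (n : N) : ¬ g.Retained 0 n := by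
  intro h
  induction h with
  | shallow hd => exact Nat.not_lt_zero _ hd
  | pred _ _ ih => exact ih

/-- Fringe nodes of the truncation at depth `d` (a pair `(n, i)` stands for the
fresh node `n^i`); at depth `0` the fringe is just (a copy of) the root. -/
def IsFringe (g : TermGraph S.bot N) (d : ℕ) (p : N × ℕ) : Prop :=
  if d = 0 then p = (g.root, 0)
  else g.Retained d p.1 ∧ ∃ h : p.2 < S.bot.ar (g.lab p.1),
    (¬ g.Retained d (g.suc p.1 ⟨p.2, h⟩) ∨
      (d - 1 ≤ g.depth p.1 ∧ p.1 ∉ g.acyPred (g.suc p.1 ⟨p.2, h⟩)))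

/-- The node set of the rigid truncation: retained nodes plus fringe nodes. -/
def TNode (g : TermGraph S.bot N) (d : ℕ) : Type :=
  {x : N ⊕ (N × ℕ) // Sum.elim (g.Retained d) (g.IsFringe d) x}

def truncLab (g : TermGraph S.bot N) (d : ℕ) (x : TNode g d) : S.bot.Sym :=
  Sum.elim (fun n => g.lab n) (fun _ => none) x.1

open Classical in
noncomputable def truncSuc (g : TermGraph S.bot N) (d : ℕ) :
    (x : TNode g d) → Fin (S.bot.ar (truncLab g d x)) → TNode g d
  | ⟨Sum.inl n, hn⟩ => fun i =>
      if hf : g.IsFringe d (n, (i : ℕ)) then ⟨Sum.inr (n, (i : ℕ)), hf⟩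
      else
        ⟨Sum.inl (g.suc n ⟨(i : ℕ), i.isLt⟩), by
          show g.Retained d (g.suc n ⟨(i : ℕ), i.isLt⟩)
          rcases Nat.eq_zero_or_pos d with hd | hd
          · subst hd
            exact ((not_retained_zero n) hn).elim
          · by_contra hc
            apply hf
            show g.IsFringe d (n, (i : ℕ))
            unfold IsFringe
            rw [if_neg (Nat.pos_iff_ne_zero.mp hd)]
            exact ⟨hn, i.isLt, Or.inl hc⟩⟩
  | ⟨Sum.inr p, hp⟩ => fun i => absurd i.isLt (Nat.not_lt_zero _)

noncomputable def truncRoot (g : TermGraph S.bot N) (d : ℕ) : TNode g d :=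
  if hd : d = 0 then
    ⟨Sum.inr (g.root, 0), by
      subst hd
      show g.IsFringe 0 (g.root, 0)
      simp [IsFringe]⟩
  else
    ⟨Sum.inl g.root, by
      show g.Retained d g.root
      exact Retained.shallow (lt_of_le_of_lt
        (Nat.sInf_le ⟨[], IsPos.root, rfl⟩) (Nat.pos_of_ne_zero hd))⟩

/-- The rigid truncation `g†d` of a partial term graph at finite depth `d`. -/
noncomputable def trunc (g : TermGraph S.bot N) (d : ℕ) :
    TermGraph S.bot (TNode g d) where
  lab := truncLab g d
  suc := truncSuc g d
  root := truncRoot g d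

end TermGraph

/-- A canonical term graph: a term graph whose nodes are sets of positions,
each node being exactly its set of positions, with all nodes reachable. -/
structure CTG (S : Signature) where
  nodes : Set (Set (List ℕ))
  tg : TermGraph S ↥nodes
  reach : tg.Reachable
  canon : ∀ n : ↥nodes, (n : Set (List ℕ)) = tg.nodePos n

namespace CTG

variable {S : Signature}

def pos (g : CTG S) : Set (List ℕ) := g.tg.pos
def Aliases (g : CTG S) : List ℕ → List ℕ → Prop := g.tg.Aliases
def posAcy (g : CTG S) : Set (List ℕ) := g.tg.posAcy
noncomputable def labAt (g : CTG S) : List ℕ → S.Sym := g.tg.labAt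

/-- A canonical partial term graph is total if it has no `⊥`-labelled node. -/
def Total (g : CTG S.bot) : Prop := g.tg.Total

/-- The rigid partial order `g ≤⊥r h`: there is a rigid `⊥`-homomorphism
from `g` to `h`. -/
def LeR (g h : CTG S.bot) : Prop :=
  ∃ φ, TermGraph.IsRigidBotHom g.tg h.tg φ

noncomputable def botDepth (g : CTG S.bot) : ℕ∞ := g.tg.botDepth

/-- `TruncIso g h d`: the rigid truncations of `g` and `h` at depth `d ≤ ω`
are isomorphic (`g†ω = g`). -/
def TruncIso {N M : Type} (g : TermGraph S.bot N) (h : TermGraph S.bot M)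
    (d : ℕ∞) : Prop :=
  (d = ⊤ → TermGraph.Iso g h) ∧
  ∀ k : ℕ, d = (k : ℕ∞) → TermGraph.Iso (g.trunc k) (h.trunc k)

/-- The rigid similarity `sim†(g,h)`: the maximal `d ≤ ω` such that
`g†d ≅ h†d`. -/
noncomputable def simr (g h : CTG S.bot) : ℕ∞ :=
  sSup {d : ℕ∞ | TruncIso g.tg h.tg d}

open Classical in
/-- The rigid distance `d†(g,h) = 2^{-sim†(g,h)}` (with `2^{-ω} = 0`). -/
noncomputable def rdist (g h : CTG S.bot) : ℝ :=
  if simr g h = ⊤ then 0 else (1 / 2 : ℝ) ^ (simr g h).toNat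

def IsUB (A : Set (CTG S.bot)) (u : CTG S.bot) : Prop := ∀ g ∈ A, LeR g u

def IsLubR (A : Set (CTG S.bot)) (u : CTG S.bot) : Prop :=
  IsUB A u ∧ ∀ v, IsUB A v → LeR u v

def IsLB (A : Set (CTG S.bot)) (l : CTG S.bot) : Prop := ∀ g ∈ A, LeR l g

def IsGlbR (A : Set (CTG S.bot)) (l : CTG S.bot) : Prop :=
  IsLB A l ∧ ∀ m, IsLB A m → LeR m l

/-- A directed set: non-empty and every two elements have an upper bound inside. -/
def DirectedR (A : Set (CTG S.bot)) : Prop :=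
  A.Nonempty ∧ ∀ g ∈ A, ∀ h ∈ A, ∃ u ∈ A, LeR g u ∧ LeR h u

/-- `L` is the limit inferior `⨆_{β<α} ⨅_{β≤ι<α} f ι` of the ordinal-indexed
sequence `(f ι)_{ι<α}` in the rigid partial order. -/
def IsLiminfR (α : Ordinal.{0}) (f : Ordinal.{0} → CTG S.bot) (L : CTG S.bot) : Prop :=
  ∃ inf : Ordinal.{0} → CTG S.bot,
    (∀ β < α, IsGlbR {g | ∃ ι, β ≤ ι ∧ ι < α ∧ g = f ι} (inf β)) ∧
    IsLubR {g | ∃ β < α, g = inf β} L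

/-- Cauchy condition for an ordinal-indexed sequence w.r.t. the rigid distance. -/
def OrdCauchy (α : Ordinal.{0}) (f : Ordinal.{0} → CTG S.bot) : Prop :=
  ∀ ε : ℝ, 0 < ε → ∃ β < α, ∀ ι ι' : Ordinal.{0},
    β < ι → ι < ι' → ι' < α → rdist (f ι) (f ι') < ε

/-- Convergence of an ordinal-indexed sequence to `g` w.r.t. the rigid distance. -/
def OrdTendsto (α : Ordinal.{0}) (f : Ordinal.{0} → CTG S.bot) (g : CTG S.bot) : Prop :=
  ∀ ε : ℝ, 0 < ε → ∃ β < α, ∀ ι : Ordinal.{0}, β < ι → ι < α → rdist (f ι) g < ε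

/-- `u` is the unravelling of `g`: the term tree with the same positions and
labels as `g` and trivial aliasing. -/
def IsUnravelling (g u : CTG S) : Prop :=
  u.pos = g.pos ∧ (∀ π ∈ g.pos, u.labAt π = g.labAt π) ∧
  (∀ π π' : List ℕ, u.Aliases π π' ↔ (π ∈ g.pos ∧ π = π'))

end CTG

/-- A labelled quotient tree over a signature `S`. -/
structure LQT (S : Signature) where
  P : Set (List ℕ)
  nonempty : P.Nonempty
  l : List ℕ → S.Sym
  rel : List ℕ → List ℕ → Prop
  rel_refl : ∀ π ∈ P, rel π π
  rel_symm : ∀ π π' : List ℕ, rel π π' → rel π' π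
  rel_trans : ∀ π π' π'' : List ℕ, rel π π' → rel π' π'' → rel π π''
  rel_mem : ∀ π π' : List ℕ, rel π π' → π ∈ P ∧ π' ∈ P
  reach_mem : ∀ (π : List ℕ) (i : ℕ), π ++ [i] ∈ P → π ∈ P
  reach_ar : ∀ (π : List ℕ) (i : ℕ), π ++ [i] ∈ P → i < S.ar (l π)
  congr_lab : ∀ π π' : List ℕ, rel π π' → l π = l π'
  congr_suc : ∀ (π π' : List ℕ) (i : ℕ), rel π π' → i < S.ar (l π) →
    rel (π ++ [i]) (π' ++ [i])

end TGR
namespace TGR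
namespace TermGraph

variable {S : Signature} {N M : Type}

theorem isPos_nil {g : TermGraph S N} {π : List ℕ} {n : N}
    (h : g.IsPos π n) (hπ : π = []) : n = g.root := by
  induction h with
  | root => rfl
  | step h i ih => simp at hπ

theorem isPos_snoc {g : TermGraph S N} {π' : List ℕ} {m : N}
    (h : g.IsPos π' m) : ∀ {π : List ℕ} {j : ℕ}, π' = π ++ [j] →
    ∃ (n : N) (hj : j < S.ar (g.lab n)), g.IsPos π n ∧ m = g.suc n ⟨j, hj⟩ := by
  induction h with
  | root => intro π j hπ; simp at hπ
  | @step π₀ n₀ h i ih =>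
    intro π j hπ
    have hlen : π₀.length = π.length := by
      have := congrArg List.length hπ; simpa using this
    obtain ⟨h1, h2⟩ := List.append_inj hπ hlen
    have hij : (i : ℕ) = j := by simpa using h2
    subst h1
    exact ⟨n₀, hij ▸ i.isLt, h, by cases hij; rfl⟩

theorem isPos_det {g : TermGraph S N} {π : List ℕ} {n m : N}
    (h1 : g.IsPos π n) (h2 : g.IsPos π m) : n = m := by
  induction h1 generalizing m with
  | root => exact (isPos_nil h2 rfl).symm
  | @step π₀ n₀ h i ih =>
    obtain ⟨n', hj, hpos, hm⟩ := isPos_snoc h2 (rfl : π₀ ++ [(i:ℕ)] = π₀ ++ [(i:ℕ)])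
    have := ih hpos
    subst this
    simp [hm]

theorem isPos_append_exists {g : TermGraph S N} {σ ρ : List ℕ} {b : N}
    (h : g.IsPos (σ ++ ρ) b) : ∃ a, g.IsPos σ a := by
  induction ρ using List.reverseRecOn generalizing b with
  | nil => exact ⟨b, by simpa using h⟩
  | append_singleton ρ j ih =>
    rw [show σ ++ (ρ ++ [j]) = (σ ++ ρ) ++ [j] by simp] at h
    obtain ⟨n, hj, hpos, _⟩ := isPos_snoc h rfl
    exact ih hpos

theorem isPos_transfer {g : TermGraph S N} {π₁ π₂ ρ : List ℕ} {a b : N}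
    (h1 : g.IsPos π₁ a) (h2 : g.IsPos π₂ a) (h3 : g.IsPos (π₂ ++ ρ) b) :
    g.IsPos (π₁ ++ ρ) b := by
  induction ρ using List.reverseRecOn generalizing b with
  | nil =>
    have : b = a := isPos_det (by simpa using h3) h2
    subst this; simpa using h1
  | append_singleton ρ j ih =>
    rw [show π₂ ++ (ρ ++ [j]) = (π₂ ++ ρ) ++ [j] by simp] at h3
    obtain ⟨c, hj, hpos, hb⟩ := isPos_snoc h3 rfl
    have hc := ih hpos
    have : π₁ ++ (ρ ++ [j]) = (π₁ ++ ρ) ++ [j] := by simp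
    rw [this, hb]
    exact hc.step ⟨j, hj⟩

end TermGraph
end TGR
namespace TGR
namespace TermGraph

variable {S : Signature} {N M : Type}

theorem exists_acyclic_pos {g : TermGraph S N} {n : N}
    (h : ∃ π, g.IsPos π n) : ∃ π, g.IsPos π n ∧ g.IsAcyclicPos π := by
  classical
  set T : Set ℕ := {k : ℕ | ∃ π : List ℕ, g.IsPos π n ∧ π.length = k} with hT
  have hne : T.Nonempty := by
    obtain ⟨π, hπ⟩ := h
    exact ⟨π.length, π, hπ, rfl⟩
  obtain ⟨π, hπ, hlen⟩ := Nat.sInf_mem hne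
  refine ⟨π, hπ, ?_⟩
  intro π₁ π₂ m h12 h2π hp1 hp2
  by_contra hne'
  obtain ⟨ρ, hρ⟩ := h2π
  have hb : g.IsPos (π₁ ++ ρ) n := isPos_transfer hp1 hp2 (hρ ▸ hπ)
  obtain ⟨t, ht⟩ := h12
  have htne : t ≠ [] := by
    intro h0; subst h0; simp at ht; exact hne' ht
  have hlt : π₁.length < π₂.length := by
    rw [← ht]
    simp [List.length_append]
    exact List.length_pos_iff.mpr htne
  have hlt2 : (π₁ ++ ρ).length < π.length := by
    rw [← hρ]; simp [List.length_append]; omega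
  have : sInf T ≤ (π₁ ++ ρ).length := Nat.sInf_le ⟨π₁ ++ ρ, hb, rfl⟩
  omega

theorem nodePosAcy_nonempty {g : TermGraph S N} {n : N}
    (h : ∃ π, g.IsPos π n) : (g.nodePosAcy n).Nonempty := by
  obtain ⟨π, h1, h2⟩ := exists_acyclic_pos h
  exact ⟨π, h1, h2⟩

/-- The arity of `⊥` is zero. -/
theorem ar_none {S : Signature} : S.bot.ar none = 0 := rfl

theorem lab_ne_none_of_ar_pos {S : Signature} {g : TermGraph S.bot N} {n : N}
    (h : 0 < S.bot.ar (g.lab n)) : g.lab n ≠ none := by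
  intro h0; rw [h0] at h; exact Nat.lt_irrefl 0 h

/-- `⊥`-homomorphisms preserve all positions. -/
theorem isPos_hom {g : TermGraph S.bot N} {h : TermGraph S.bot M} {φ : N → M}
    (hφ : IsDHom ({none} : Set (Option S.Sym)) g h φ) {π : List ℕ} {n : N}
    (hp : g.IsPos π n) : h.IsPos π (φ n) := by
  induction hp with
  | root => rw [hφ.root_eq]; exact IsPos.root
  | @step π₀ n₀ hp0 i ih =>
    have hnb : g.lab n₀ ∉ ({none} : Set (Option S.Sym)) := by
      show g.lab n₀ ≠ none
      exact lab_ne_none_of_ar_pos (Nat.lt_of_le_of_lt (Nat.zero_le _) i.isLt)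
    have hlab := hφ.lab_eq n₀ hnb
    have hi' : (i : ℕ) < S.bot.ar (h.lab (φ n₀)) := by rw [hlab]; exact i.isLt
    have hsuc := hφ.suc_eq n₀ hnb (i : ℕ) i.isLt hi'
    have : g.suc n₀ ⟨(i : ℕ), i.isLt⟩ = g.suc n₀ i := by congr
    rw [this] at hsuc
    rw [hsuc]
    exact ih.step ⟨(i : ℕ), hi'⟩

/-- The node at strict prefix of a position is not labelled `⊥`. -/
theorem lab_ne_none_of_strict_prefix {g : TermGraph S.bot N} {σ ρ : List ℕ}
    {a b : N} (hρ : ρ ≠ []) (hb : g.IsPos (σ ++ ρ) b) (ha : g.IsPos σ a) :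
    g.lab a ≠ none := by
  obtain ⟨j, ρ', hρ'⟩ := List.exists_cons_of_ne_nil hρ
  subst hρ'
  rw [show σ ++ (j :: ρ') = (σ ++ [j]) ++ ρ' by simp] at hb
  obtain ⟨c, hc⟩ := isPos_append_exists hb
  obtain ⟨a', hj, ha', hc'⟩ := isPos_snoc hc rfl
  have : a' = a := isPos_det ha' ha
  subst this
  exact lab_ne_none_of_ar_pos (Nat.lt_of_le_of_lt (Nat.zero_le _) hj)

end TermGraph
end TGR
namespace TGR
namespace TermGraph

variable {S : Signature} {N M K : Type}

theorem nodeAt_eq {g : TermGraph S N} {π : List ℕ} {n : N}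
    (h : g.IsPos π n) : g.nodeAt π = n := by
  unfold nodeAt
  rw [dif_pos ⟨n, h⟩]
  exact isPos_det (Exists.choose_spec (⟨n, h⟩ : ∃ m, g.IsPos π m)) h

theorem labAt_eq {g : TermGraph S N} {π : List ℕ} {n : N}
    (h : g.IsPos π n) : g.labAt π = g.lab n := by
  unfold labAt; rw [nodeAt_eq h]

/-- Two non-`⊥` nodes (possibly of different graphs) rigidly mapped to the same
node of a common target share a common (acyclic) position. -/
theorem rigid_common_pos {gA : TermGraph S.bot N} {gB : TermGraph S.bot M}
    {w : TermGraph S.bot K} {φA : N → K} {φB : M → K}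
    (hA : IsRigidBotHom gA w φA) (hB : IsRigidBotHom gB w φB)
    {n : N} {m : M} (hn : gA.lab n ≠ none) (hm : gB.lab m ≠ none)
    (heq : φA n = φB m) (hreach : ∃ π, gA.IsPos π n) :
    ∃ τ, gA.IsPos τ n ∧ gB.IsPos τ m := by
  have h1 : gA.nodePosAcy n = w.nodePosAcy (φA n) :=
    hA.2 n (by exact hn)
  have h2 : gB.nodePosAcy m = w.nodePosAcy (φB m) :=
    hB.2 m (by exact hm)
  rw [heq] at h1
  obtain ⟨τ, hτ⟩ := nodePosAcy_nonempty hreach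
  have : τ ∈ gB.nodePosAcy m := by rw [h2, ← h1]; exact hτ
  exact ⟨τ, hτ.1, this.1⟩

/-- Injectivity of rigid `⊥`-homomorphisms on non-`⊥` nodes. -/
theorem rigid_inj {gA : TermGraph S.bot N} {w : TermGraph S.bot K} {φA : N → K}
    (hA : IsRigidBotHom gA w φA) {n m : N}
    (hn : gA.lab n ≠ none) (hm : gA.lab m ≠ none)
    (heq : φA n = φA m) (hreach : ∃ π, gA.IsPos π n) : n = m := by
  obtain ⟨τ, h1, h2⟩ := rigid_common_pos hA hA hn hm heq hreach
  exact isPos_det h1 h2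

end TermGraph
end TGR
namespace TGR
open TermGraph

variable {S : Signature}

/-- The aliasing relation of the least upper bound of `{g₁, g₂}`: generated by
the aliasing of `g₁` and `g₂` and closed under successors of defined classes. -/
inductive Rel (g₁ g₂ : CTG S.bot) : List ℕ → List ℕ → Prop
  | of₁ {π π' : List ℕ} {n : ↥g₁.nodes} (h : g₁.tg.IsPos π n)
      (h' : g₁.tg.IsPos π' n) : Rel g₁ g₂ π π'
  | of₂ {π π' : List ℕ} {n : ↥g₂.nodes} (h : g₂.tg.IsPos π n)
      (h' : g₂.tg.IsPos π' n) : Rel g₁ g₂ π π'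
  | symm {π π' : List ℕ} (h : Rel g₁ g₂ π π') : Rel g₁ g₂ π' π
  | trans {π π' π'' : List ℕ} (h : Rel g₁ g₂ π π') (h' : Rel g₁ g₂ π' π'') :
      Rel g₁ g₂ π π''
  | suc₁ {π π' σ : List ℕ} {n : ↥g₁.nodes} {j : ℕ} (h : Rel g₁ g₂ π π')
      (hσ : Rel g₁ g₂ σ π) (hn : g₁.tg.IsPos σ n) (hnb : g₁.tg.lab n ≠ none)
      (hj : j < S.bot.ar (g₁.tg.lab n)) : Rel g₁ g₂ (π ++ [j]) (π' ++ [j])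
  | suc₂ {π π' σ : List ℕ} {n : ↥g₂.nodes} {j : ℕ} (h : Rel g₁ g₂ π π')
      (hσ : Rel g₁ g₂ σ π) (hn : g₂.tg.IsPos σ n) (hnb : g₂.tg.lab n ≠ none)
      (hj : j < S.bot.ar (g₂.tg.lab n)) : Rel g₁ g₂ (π ++ [j]) (π' ++ [j])

namespace Rel

variable {g₁ g₂ : CTG S.bot}

theorem left {π π' : List ℕ} (h : Rel g₁ g₂ π π') : Rel g₁ g₂ π π :=
  h.trans h.symm

theorem right {π π' : List ℕ} (h : Rel g₁ g₂ π π') : Rel g₁ g₂ π' π' :=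
  h.symm.trans h

/-- Classes are closed under taking prefixes (as self-related positions). -/
theorem prefix_self {π π' : List ℕ} (h : Rel g₁ g₂ π π') :
    ∀ σ : List ℕ, ∀ j : ℕ, (π = σ ++ [j] ∨ π' = σ ++ [j]) → Rel g₁ g₂ σ σ := by
  induction h with
  | @of₁ π π' n h h' =>
    rintro σ j (rfl | rfl)
    · obtain ⟨a, ha⟩ := isPos_append_exists h
      exact of₁ ha ha
    · obtain ⟨a, ha⟩ := isPos_append_exists h'
      exact of₁ ha ha
  | @of₂ π π' n h h' =>
    rintro σ j (rfl | rfl)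
    · obtain ⟨a, ha⟩ := isPos_append_exists h
      exact of₂ ha ha
    · obtain ⟨a, ha⟩ := isPos_append_exists h'
      exact of₂ ha ha
  | symm h ih => rintro σ j (rfl | rfl)
                 · exact ih σ j (Or.inr rfl)
                 · exact ih σ j (Or.inl rfl)
  | trans h h' ih ih' =>
    rintro σ j (rfl | rfl)
    · exact ih σ j (Or.inl rfl)
    · exact ih' σ j (Or.inr rfl)
  | @suc₁ π π' σ₀ n j₀ h hσ hn hnb hj ih ihσ =>
    rintro σ j (hs | hs)
    · obtain ⟨h1, h2⟩ := List.append_inj hs (by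
        have := congrArg List.length hs; simpa using this)
      subst h1
      exact h.left
    · obtain ⟨h1, h2⟩ := List.append_inj hs (by
        have := congrArg List.length hs; simpa using this)
      subst h1
      exact h.right
  | @suc₂ π π' σ₀ n j₀ h hσ hn hnb hj ih ihσ =>
    rintro σ j (hs | hs)
    · obtain ⟨h1, h2⟩ := List.append_inj hs (by
        have := congrArg List.length hs; simpa using this)
      subst h1
      exact h.left
    · obtain ⟨h1, h2⟩ := List.append_inj hs (by
        have := congrArg List.length hs; simpa using this)
      subst h1
      exact h.right

/-- Related positions are aliased in every upper bound. -/
theorem aliases {w : CTG S.bot} {ψ₁ : ↥g₁.nodes → ↥w.nodes}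
    {ψ₂ : ↥g₂.nodes → ↥w.nodes}
    (hψ₁ : TermGraph.IsDHom ({none} : Set (Option S.Sym)) g₁.tg w.tg ψ₁)
    (hψ₂ : TermGraph.IsDHom ({none} : Set (Option S.Sym)) g₂.tg w.tg ψ₂)
    {π π' : List ℕ} (h : Rel g₁ g₂ π π') :
    ∃ q, w.tg.IsPos π q ∧ w.tg.IsPos π' q := by
  induction h with
  | of₁ h h' => exact ⟨_, isPos_hom hψ₁ h, isPos_hom hψ₁ h'⟩
  | of₂ h h' => exact ⟨_, isPos_hom hψ₂ h, isPos_hom hψ₂ h'⟩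
  | symm h ih => obtain ⟨q, h1, h2⟩ := ih; exact ⟨q, h2, h1⟩
  | trans h h' ih ih' =>
    obtain ⟨q, h1, h2⟩ := ih
    obtain ⟨q', h1', h2'⟩ := ih'
    exact ⟨q, h1, (isPos_det h1' h2) ▸ h2'⟩
  | @suc₁ π π' σ n j h hσ hn hnb hj ih ihσ =>
    obtain ⟨q, h1, h2⟩ := ih
    obtain ⟨q', h1', h2'⟩ := ihσ
    have hq : q' = q := isPos_det h2' h1
    subst hq
    have hqn : q' = ψ₁ n := isPos_det h1' (isPos_hom hψ₁ hn)
    subst hqn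
    have hlab : w.tg.lab (ψ₁ n) = g₁.tg.lab n :=
      hψ₁.lab_eq n (by exact hnb)
    have hj' : j < S.bot.ar (w.tg.lab (ψ₁ n)) := by rw [hlab]; exact hj
    exact ⟨w.tg.suc (ψ₁ n) ⟨j, hj'⟩, h1.step ⟨j, hj'⟩, h2.step ⟨j, hj'⟩⟩
  | @suc₂ π π' σ n j h hσ hn hnb hj ih ihσ =>
    obtain ⟨q, h1, h2⟩ := ih
    obtain ⟨q', h1', h2'⟩ := ihσ
    have hq : q' = q := isPos_det h2' h1
    subst hq
    have hqn : q' = ψ₂ n := isPos_det h1' (isPos_hom hψ₂ hn)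
    subst hqn
    have hlab : w.tg.lab (ψ₂ n) = g₂.tg.lab n :=
      hψ₂.lab_eq n (by exact hnb)
    have hj' : j < S.bot.ar (w.tg.lab (ψ₂ n)) := by rw [hlab]; exact hj
    exact ⟨w.tg.suc (ψ₂ n) ⟨j, hj'⟩, h1.step ⟨j, hj'⟩, h2.step ⟨j, hj'⟩⟩

end Rel
end TGR
namespace TGR
open TermGraph

variable {S : Signature}

section Construction

variable (g₁ g₂ : CTG S.bot)

/-- The class of a position. -/
def cls (π : List ℕ) : Set (List ℕ) := {π' | Rel g₁ g₂ π π'}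

/-- The nodes of the least upper bound. -/
def VNodes : Set (Set (List ℕ)) :=
  {X | ∃ π, Rel g₁ g₂ π π ∧ X = cls g₁ g₂ π}

/-- A position whose class is "defined" (non-`⊥`). -/
def DefW (σ : List ℕ) : Prop :=
  (∃ (σ' : List ℕ) (n : ↥g₁.nodes), Rel g₁ g₂ σ' σ ∧ g₁.tg.IsPos σ' n ∧
    g₁.tg.lab n ≠ none) ∨
  (∃ (σ' : List ℕ) (n : ↥g₂.nodes), Rel g₁ g₂ σ' σ ∧ g₂.tg.IsPos σ' n ∧
    g₂.tg.lab n ≠ none)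

open Classical in
/-- The label of the class of a position. -/
noncomputable def labW (σ : List ℕ) : Option S.Sym :=
  if h : ∃ (σ' : List ℕ) (n : ↥g₁.nodes), Rel g₁ g₂ σ' σ ∧ g₁.tg.IsPos σ' n ∧
      g₁.tg.lab n ≠ none then
    g₁.tg.lab h.choose_spec.choose
  else if h : ∃ (σ' : List ℕ) (n : ↥g₂.nodes), Rel g₁ g₂ σ' σ ∧
      g₂.tg.IsPos σ' n ∧ g₂.tg.lab n ≠ none then
    g₂.tg.lab h.choose_spec.choose
  else none

variable {g₁ g₂}

theorem cls_eq_of_rel {π π' : List ℕ} (h : Rel g₁ g₂ π π') :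
    cls g₁ g₂ π = cls g₁ g₂ π' := by
  ext τ
  exact ⟨fun ht => h.symm.trans ht, fun ht => h.trans ht⟩

theorem rel_of_cls_eq {π π' : List ℕ} (h : Rel g₁ g₂ π π)
    (he : cls g₁ g₂ π = cls g₁ g₂ π') : Rel g₁ g₂ π' π := by
  have hm : π ∈ cls g₁ g₂ π' := he ▸ (show π ∈ cls g₁ g₂ π from h)
  exact hm

theorem labW_eq_none {σ : List ℕ} (h : ¬ DefW g₁ g₂ σ) : labW g₁ g₂ σ = none := by
  unfold labW
  erw [dif_neg, dif_neg]
  · intro hc; exact h (Or.inr hc)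
  · intro hc; exact h (Or.inl hc)

theorem labW_ne_none {σ : List ℕ} (h : DefW g₁ g₂ σ) : labW g₁ g₂ σ ≠ none := by
  unfold labW
  rcases h with h | h
  · erw [dif_pos h]; exact h.choose_spec.choose_spec.2.2
  · by_cases h1 : ∃ (σ' : List ℕ) (n : ↥g₁.nodes), Rel g₁ g₂ σ' σ ∧
        g₁.tg.IsPos σ' n ∧ g₁.tg.lab n ≠ none
    · erw [dif_pos h1]; exact h1.choose_spec.choose_spec.2.2
    · erw [dif_neg h1, dif_pos h]; exact h.choose_spec.choose_spec.2.2

/-- From a bound on the arity of the class label, extract a witness. -/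
theorem exists_wit_of_lt {σ : List ℕ} {j : ℕ}
    (h : j < S.bot.ar (labW g₁ g₂ σ)) :
    (∃ (σ' : List ℕ) (n : ↥g₁.nodes), Rel g₁ g₂ σ' σ ∧ g₁.tg.IsPos σ' n ∧
      g₁.tg.lab n ≠ none ∧ j < S.bot.ar (g₁.tg.lab n)) ∨
    (∃ (σ' : List ℕ) (n : ↥g₂.nodes), Rel g₁ g₂ σ' σ ∧ g₂.tg.IsPos σ' n ∧
      g₂.tg.lab n ≠ none ∧ j < S.bot.ar (g₂.tg.lab n)) := by
  unfold labW at h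
  by_cases h1 : ∃ (σ' : List ℕ) (n : ↥g₁.nodes), Rel g₁ g₂ σ' σ ∧
      g₁.tg.IsPos σ' n ∧ g₁.tg.lab n ≠ none
  · erw [dif_pos h1] at h
    obtain ⟨ha, hb, _⟩ := h1.choose_spec.choose_spec
    exact Or.inl ⟨_, _, ha, hb, lab_ne_none_of_ar_pos
      (Nat.lt_of_le_of_lt (Nat.zero_le _) h), h⟩
  · erw [dif_neg h1] at h
    by_cases h2 : ∃ (σ' : List ℕ) (n : ↥g₂.nodes), Rel g₁ g₂ σ' σ ∧
        g₂.tg.IsPos σ' n ∧ g₂.tg.lab n ≠ none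
    · erw [dif_pos h2] at h
      obtain ⟨ha, hb, _⟩ := h2.choose_spec.choose_spec
      exact Or.inr ⟨_, _, ha, hb, lab_ne_none_of_ar_pos
        (Nat.lt_of_le_of_lt (Nat.zero_le _) h), h⟩
    · erw [dif_neg h2] at h
      exact absurd h (by simp [ar_none])

/-- Positions ending at a non-`⊥` `g₁`-node give witnesses; dually. -/
theorem defW_of_wit₁ {σ σ' : List ℕ} {n : ↥g₁.nodes}
    (hr : Rel g₁ g₂ σ' σ) (hp : g₁.tg.IsPos σ' n) (hnb : g₁.tg.lab n ≠ none) :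
    DefW g₁ g₂ σ := Or.inl ⟨σ', n, hr, hp, hnb⟩

theorem defW_of_wit₂ {σ σ' : List ℕ} {n : ↥g₂.nodes}
    (hr : Rel g₁ g₂ σ' σ) (hp : g₂.tg.IsPos σ' n) (hnb : g₂.tg.lab n ≠ none) :
    DefW g₁ g₂ σ := Or.inr ⟨σ', n, hr, hp, hnb⟩

/-- Extract a witness with arity bound from a snoc-position in the class. -/
theorem rel_snoc_wit {π₀ π₀' : List ℕ} (h : Rel g₁ g₂ π₀ π₀') :
    ∀ (σ : List ℕ) (j : ℕ), (π₀ = σ ++ [j] ∨ π₀' = σ ++ [j]) →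
    (∃ (σ' : List ℕ) (n : ↥g₁.nodes), Rel g₁ g₂ σ' σ ∧ g₁.tg.IsPos σ' n ∧
      g₁.tg.lab n ≠ none ∧ j < S.bot.ar (g₁.tg.lab n)) ∨
    (∃ (σ' : List ℕ) (n : ↥g₂.nodes), Rel g₁ g₂ σ' σ ∧ g₂.tg.IsPos σ' n ∧
      g₂.tg.lab n ≠ none ∧ j < S.bot.ar (g₂.tg.lab n)) := by
  induction h with
  | @of₁ π π' n h h' =>
    rintro σ j (hs | hs)
    · subst hs
      obtain ⟨a, hj, ha, -⟩ := isPos_snoc h rfl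
      exact Or.inl ⟨σ, a, Rel.of₁ ha ha, ha,
        lab_ne_none_of_ar_pos (Nat.lt_of_le_of_lt (Nat.zero_le _) hj), hj⟩
    · subst hs
      obtain ⟨a, hj, ha, -⟩ := isPos_snoc h' rfl
      exact Or.inl ⟨σ, a, Rel.of₁ ha ha, ha,
        lab_ne_none_of_ar_pos (Nat.lt_of_le_of_lt (Nat.zero_le _) hj), hj⟩
  | @of₂ π π' n h h' =>
    rintro σ j (hs | hs)
    · subst hs
      obtain ⟨a, hj, ha, -⟩ := isPos_snoc h rfl
      exact Or.inr ⟨σ, a, Rel.of₂ ha ha, ha,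
        lab_ne_none_of_ar_pos (Nat.lt_of_le_of_lt (Nat.zero_le _) hj), hj⟩
    · subst hs
      obtain ⟨a, hj, ha, -⟩ := isPos_snoc h' rfl
      exact Or.inr ⟨σ, a, Rel.of₂ ha ha, ha,
        lab_ne_none_of_ar_pos (Nat.lt_of_le_of_lt (Nat.zero_le _) hj), hj⟩
  | symm h ih =>
    rintro σ j (hs | hs)
    · exact ih σ j (Or.inr hs)
    · exact ih σ j (Or.inl hs)
  | trans h h' ih ih' =>
    rintro σ j (hs | hs)
    · exact ih σ j (Or.inl hs)
    · exact ih' σ j (Or.inr hs)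
  | @suc₁ π π' σ₀ n j₀ h hσ hn hnb hj ih ihσ =>
    rintro σ j (hs | hs)
    · obtain ⟨h1, h2⟩ := List.append_inj hs (by
        have := congrArg List.length hs; simpa using this)
      subst h1
      have hjj : j₀ = j := by simpa using h2
      subst hjj
      exact Or.inl ⟨σ₀, n, hσ, hn, hnb, hj⟩
    · obtain ⟨h1, h2⟩ := List.append_inj hs (by
        have := congrArg List.length hs; simpa using this)
      subst h1
      have hjj : j₀ = j := by simpa using h2
      subst hjj
      exact Or.inl ⟨σ₀, n, hσ.trans h, hn, hnb, hj⟩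
  | @suc₂ π π' σ₀ n j₀ h hσ hn hnb hj ih ihσ =>
    rintro σ j (hs | hs)
    · obtain ⟨h1, h2⟩ := List.append_inj hs (by
        have := congrArg List.length hs; simpa using this)
      subst h1
      have hjj : j₀ = j := by simpa using h2
      subst hjj
      exact Or.inr ⟨σ₀, n, hσ, hn, hnb, hj⟩
    · obtain ⟨h1, h2⟩ := List.append_inj hs (by
        have := congrArg List.length hs; simpa using this)
      subst h1
      have hjj : j₀ = j := by simpa using h2
      subst hjj
      exact Or.inr ⟨σ₀, n, hσ.trans h, hn, hnb, hj⟩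

end Construction
end TGR
namespace TGR
open TermGraph

variable {S : Signature} {g₁ g₂ u : CTG S.bot}
  {φ₁ : ↥g₁.nodes → ↥u.nodes} {φ₂ : ↥g₂.nodes → ↥u.nodes}

section WellDef

variable (hφ₁ : IsRigidBotHom g₁.tg u.tg φ₁) (hφ₂ : IsRigidBotHom g₂.tg u.tg φ₂)

include hφ₁ hφ₂

/-- Related positions are aliased in `u`. -/
theorem rel_u_alias {π π' : List ℕ} (h : Rel g₁ g₂ π π') :
    ∃ q, u.tg.IsPos π q ∧ u.tg.IsPos π' q :=
  Rel.aliases hφ₁.1 hφ₂.1 h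

theorem labAt_wit₁ {σ σ' : List ℕ} {n : ↥g₁.nodes} (hr : Rel g₁ g₂ σ' σ)
    (hp : g₁.tg.IsPos σ' n) (hnb : g₁.tg.lab n ≠ none) :
    u.tg.labAt σ = g₁.tg.lab n := by
  obtain ⟨q, hq1, hq2⟩ := rel_u_alias hφ₁ hφ₂ hr
  have hqn : q = φ₁ n := isPos_det hq1 (isPos_hom hφ₁.1 hp)
  subst hqn
  rw [labAt_eq hq2]
  exact hφ₁.1.lab_eq n (by exact hnb)

theorem labAt_wit₂ {σ σ' : List ℕ} {n : ↥g₂.nodes} (hr : Rel g₁ g₂ σ' σ)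
    (hp : g₂.tg.IsPos σ' n) (hnb : g₂.tg.lab n ≠ none) :
    u.tg.labAt σ = g₂.tg.lab n := by
  obtain ⟨q, hq1, hq2⟩ := rel_u_alias hφ₁ hφ₂ hr
  have hqn : q = φ₂ n := isPos_det hq1 (isPos_hom hφ₂.1 hp)
  subst hqn
  rw [labAt_eq hq2]
  exact hφ₂.1.lab_eq n (by exact hnb)

theorem labW_eq_labAt {σ : List ℕ} (h : DefW g₁ g₂ σ) :
    labW g₁ g₂ σ = u.tg.labAt σ := by
  unfold labW
  by_cases h1 : ∃ (σ' : List ℕ) (n : ↥g₁.nodes), Rel g₁ g₂ σ' σ ∧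
      g₁.tg.IsPos σ' n ∧ g₁.tg.lab n ≠ none
  · erw [dif_pos h1]
    obtain ⟨ha, hb, hc⟩ := h1.choose_spec.choose_spec
    exact (labAt_wit₁ hφ₁ hφ₂ ha hb hc).symm
  · erw [dif_neg h1]
    by_cases h2 : ∃ (σ' : List ℕ) (n : ↥g₂.nodes), Rel g₁ g₂ σ' σ ∧
        g₂.tg.IsPos σ' n ∧ g₂.tg.lab n ≠ none
    · erw [dif_pos h2]
      obtain ⟨ha, hb, hc⟩ := h2.choose_spec.choose_spec
      exact (labAt_wit₂ hφ₁ hφ₂ ha hb hc).symm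
    · rcases h with h | h
      · exact absurd h h1
      · exact absurd h h2

theorem labW_wit₁ {σ σ' : List ℕ} {n : ↥g₁.nodes} (hr : Rel g₁ g₂ σ' σ)
    (hp : g₁.tg.IsPos σ' n) (hnb : g₁.tg.lab n ≠ none) :
    labW g₁ g₂ σ = g₁.tg.lab n :=
  (labW_eq_labAt hφ₁ hφ₂ (defW_of_wit₁ hr hp hnb)).trans
    (labAt_wit₁ hφ₁ hφ₂ hr hp hnb)

theorem labW_wit₂ {σ σ' : List ℕ} {n : ↥g₂.nodes} (hr : Rel g₁ g₂ σ' σ)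
    (hp : g₂.tg.IsPos σ' n) (hnb : g₂.tg.lab n ≠ none) :
    labW g₁ g₂ σ = g₂.tg.lab n :=
  (labW_eq_labAt hφ₁ hφ₂ (defW_of_wit₂ hr hp hnb)).trans
    (labAt_wit₂ hφ₁ hφ₂ hr hp hnb)

end WellDef
end TGR
namespace TGR
open TermGraph

variable {S : Signature}

section VCons

variable (g₁ g₂ : CTG S.bot)

noncomputable def rep (X : ↥(VNodes g₁ g₂)) : List ℕ := X.2.choose

theorem rep_spec (X : ↥(VNodes g₁ g₂)) :
    Rel g₁ g₂ (rep g₁ g₂ X) (rep g₁ g₂ X) ∧ X.1 = cls g₁ g₂ (rep g₁ g₂ X) :=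
  X.2.choose_spec

variable {g₁ g₂} in
theorem rel_rep_of_cls {X : ↥(VNodes g₁ g₂)} {π : List ℕ}
    (hcls : X.1 = cls g₁ g₂ π) : Rel g₁ g₂ (rep g₁ g₂ X) π :=
  (rel_of_cls_eq (rep_spec g₁ g₂ X).1
    (((rep_spec g₁ g₂ X).2.symm).trans hcls)).symm

/-- The underlying term graph of the least upper bound. -/
noncomputable def vtg : TermGraph S.bot ↥(VNodes g₁ g₂) where
  lab X := labW g₁ g₂ (rep g₁ g₂ X)
  suc X := fun j => ⟨cls g₁ g₂ (rep g₁ g₂ X ++ [(j : ℕ)]), by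
    rcases exists_wit_of_lt j.isLt with ⟨σ', n, hr, hp, hnb, hj⟩ |
      ⟨σ', n, hr, hp, hnb, hj⟩
    · exact ⟨_, Rel.suc₁ (rep_spec g₁ g₂ X).1 hr hp hnb hj, rfl⟩
    · exact ⟨_, Rel.suc₂ (rep_spec g₁ g₂ X).1 hr hp hnb hj, rfl⟩⟩
  root := ⟨cls g₁ g₂ [], ⟨[], Rel.of₁ IsPos.root IsPos.root, rfl⟩⟩

end VCons

section VPos

variable {g₁ g₂ u : CTG S.bot}
  {φ₁ : ↥g₁.nodes → ↥u.nodes} {φ₂ : ↥g₂.nodes → ↥u.nodes}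
  (hφ₁ : IsRigidBotHom g₁.tg u.tg φ₁) (hφ₂ : IsRigidBotHom g₂.tg u.tg φ₂)

include hφ₁ hφ₂

theorem isPos_vtg {π : List ℕ} {X : ↥(VNodes g₁ g₂)} :
    (vtg g₁ g₂).IsPos π X ↔ Rel g₁ g₂ π π ∧ X.1 = cls g₁ g₂ π := by
  constructor
  · intro h
    induction h with
    | root => exact ⟨Rel.of₁ IsPos.root IsPos.root, rfl⟩
    | @step π₀ X₀ h i ih =>
      obtain ⟨hrel, hcls⟩ := ih
      have hrp : Rel g₁ g₂ (rep g₁ g₂ X₀) π₀ := rel_rep_of_cls hcls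
      rcases exists_wit_of_lt i.isLt with ⟨σ', n, hr, hp, hnb, hj⟩ |
        ⟨σ', n, hr, hp, hnb, hj⟩
      · refine ⟨Rel.suc₁ hrel (hr.trans hrp) hp hnb hj, ?_⟩
        exact cls_eq_of_rel (Rel.suc₁ hrp hr hp hnb hj)
      · refine ⟨Rel.suc₂ hrel (hr.trans hrp) hp hnb hj, ?_⟩
        exact cls_eq_of_rel (Rel.suc₂ hrp hr hp hnb hj)
  · intro ⟨hrel, hcls⟩
    induction π using List.reverseRecOn generalizing X with
    | nil =>
      have : X = (vtg g₁ g₂).root := Subtype.ext hcls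
      rw [this]; exact IsPos.root
    | append_singleton π j ih =>
      have hπ : Rel g₁ g₂ π π := hrel.prefix_self π j (Or.inl rfl)
      set Xπ : ↥(VNodes g₁ g₂) := ⟨cls g₁ g₂ π, ⟨π, hπ, rfl⟩⟩ with hXπ
      have hpos : (vtg g₁ g₂).IsPos π Xπ := ih hπ rfl
      have hrp : Rel g₁ g₂ (rep g₁ g₂ Xπ) π := rel_rep_of_cls rfl
      rcases rel_snoc_wit hrel π j (Or.inl rfl) with ⟨σ', n, hr, hp, hnb, hj⟩ |
        ⟨σ', n, hr, hp, hnb, hj⟩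
      · have hlab : (vtg g₁ g₂).lab Xπ = g₁.tg.lab n :=
          labW_wit₁ hφ₁ hφ₂ (hr.trans hrp.symm) hp hnb
        have hj' : j < S.bot.ar ((vtg g₁ g₂).lab Xπ) := by rw [hlab]; exact hj
        have hstep := hpos.step ⟨j, hj'⟩
        have hXeq : (vtg g₁ g₂).suc Xπ ⟨j, hj'⟩ = X := by
          apply Subtype.ext
          show cls g₁ g₂ (rep g₁ g₂ Xπ ++ [j]) = X.1
          rw [hcls]
          exact cls_eq_of_rel (Rel.suc₁ hrp (hr.trans hrp.symm) hp hnb hj)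
        rwa [hXeq] at hstep
      · have hlab : (vtg g₁ g₂).lab Xπ = g₂.tg.lab n :=
          labW_wit₂ hφ₁ hφ₂ (hr.trans hrp.symm) hp hnb
        have hj' : j < S.bot.ar ((vtg g₁ g₂).lab Xπ) := by rw [hlab]; exact hj
        have hstep := hpos.step ⟨j, hj'⟩
        have hXeq : (vtg g₁ g₂).suc Xπ ⟨j, hj'⟩ = X := by
          apply Subtype.ext
          show cls g₁ g₂ (rep g₁ g₂ Xπ ++ [j]) = X.1
          rw [hcls]
          exact cls_eq_of_rel (Rel.suc₂ hrp (hr.trans hrp.symm) hp hnb hj)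
        rwa [hXeq] at hstep

/-- The least upper bound as a canonical term graph. -/
noncomputable def vCTG : CTG S.bot where
  nodes := VNodes g₁ g₂
  tg := vtg g₁ g₂
  reach := by
    intro X
    exact ⟨rep g₁ g₂ X, (isPos_vtg hφ₁ hφ₂).2 (rep_spec g₁ g₂ X)⟩
  canon := by
    intro X
    ext π'
    rw [(rep_spec g₁ g₂ X).2]
    constructor
    · intro h
      exact (isPos_vtg hφ₁ hφ₂).2 ⟨Rel.right h,
        ((rep_spec g₁ g₂ X).2).trans (cls_eq_of_rel h)⟩
    · intro h
      obtain ⟨hrel, hcls⟩ := (isPos_vtg hφ₁ hφ₂).1 h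
      have := rel_rep_of_cls hcls
      exact this
end VPos
end TGR
namespace TGR
open TermGraph

variable {S : Signature} {g₁ g₂ u : CTG S.bot}
  {φ₁ : ↥g₁.nodes → ↥u.nodes} {φ₂ : ↥g₂.nodes → ↥u.nodes}

section UB

variable (hφ₁ : IsRigidBotHom g₁.tg u.tg φ₁) (hφ₂ : IsRigidBotHom g₂.tg u.tg φ₂)

include hφ₁ hφ₂

theorem rel_of_common_image {σ₁ σ₂ : List ℕ} {q : ↥u.nodes}
    (h1 : (∃ n : ↥g₁.nodes, g₁.tg.IsPos σ₁ n ∧ g₁.tg.lab n ≠ none ∧ φ₁ n = q) ∨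
          (∃ m : ↥g₂.nodes, g₂.tg.IsPos σ₁ m ∧ g₂.tg.lab m ≠ none ∧ φ₂ m = q))
    (h2 : (∃ n : ↥g₁.nodes, g₁.tg.IsPos σ₂ n ∧ g₁.tg.lab n ≠ none ∧ φ₁ n = q) ∨
          (∃ m : ↥g₂.nodes, g₂.tg.IsPos σ₂ m ∧ g₂.tg.lab m ≠ none ∧ φ₂ m = q)) :
    Rel g₁ g₂ σ₁ σ₂ := by
  rcases h1 with ⟨n₁, hp1, hb1, hq1⟩ | ⟨n₁, hp1, hb1, hq1⟩ <;>
    rcases h2 with ⟨n₂, hp2, hb2, hq2⟩ | ⟨n₂, hp2, hb2, hq2⟩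
  · have : n₁ = n₂ := rigid_inj hφ₁ hb1 hb2 (hq1.trans hq2.symm) ⟨σ₁, hp1⟩
    subst this
    exact Rel.of₁ hp1 hp2
  · obtain ⟨τ, ht1, ht2⟩ := rigid_common_pos hφ₁ hφ₂ hb1 hb2
      (hq1.trans hq2.symm) ⟨σ₁, hp1⟩
    exact (Rel.of₁ hp1 ht1).trans (Rel.of₂ ht2 hp2)
  · obtain ⟨τ, ht1, ht2⟩ := rigid_common_pos hφ₂ hφ₁ hb1 hb2
      (hq1.trans hq2.symm) ⟨σ₁, hp1⟩
    exact (Rel.of₂ hp1 ht1).trans (Rel.of₁ ht2 hp2)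
  · have : n₁ = n₂ := rigid_inj hφ₂ hb1 hb2 (hq1.trans hq2.symm) ⟨σ₁, hp1⟩
    subst this
    exact Rel.of₂ hp1 hp2

end UB

section Phi

variable (g₁ g₂ : CTG S.bot)

noncomputable def posOf₁ (n : ↥g₁.nodes) : List ℕ := (g₁.reach n).choose

noncomputable def posOf₂ (n : ↥g₂.nodes) : List ℕ := (g₂.reach n).choose

theorem posOf₁_spec (n : ↥g₁.nodes) : g₁.tg.IsPos (posOf₁ g₁ n) n :=
  (g₁.reach n).choose_spec

theorem posOf₂_spec (n : ↥g₂.nodes) : g₂.tg.IsPos (posOf₂ g₂ n) n :=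
  (g₂.reach n).choose_spec

noncomputable def Phi₁ (n : ↥g₁.nodes) : ↥(VNodes g₁ g₂) :=
  ⟨cls g₁ g₂ (posOf₁ g₁ n),
    ⟨posOf₁ g₁ n, Rel.of₁ (posOf₁_spec g₁ n) (posOf₁_spec g₁ n), rfl⟩⟩

noncomputable def Phi₂ (n : ↥g₂.nodes) : ↥(VNodes g₁ g₂) :=
  ⟨cls g₁ g₂ (posOf₂ g₂ n),
    ⟨posOf₂ g₂ n, Rel.of₂ (posOf₂_spec g₂ n) (posOf₂_spec g₂ n), rfl⟩⟩

end Phi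
end TGR
namespace TGR
open TermGraph

variable {S : Signature} {g₁ g₂ u : CTG S.bot}
  {φ₁ : ↥g₁.nodes → ↥u.nodes} {φ₂ : ↥g₂.nodes → ↥u.nodes}

section PhiHom

variable (hφ₁ : IsRigidBotHom g₁.tg u.tg φ₁) (hφ₂ : IsRigidBotHom g₂.tg u.tg φ₂)

include hφ₁ hφ₂

/-- A non-`⊥` node of `v` at position `π` yields a defining witness mapped to
the `u`-node at `π`. -/
theorem vnode_wit {X : ↥(VNodes g₁ g₂)} (hnb : (vtg g₁ g₂).lab X ≠ none)
    {π : List ℕ} (hX : X.1 = cls g₁ g₂ π) {q : ↥u.nodes}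
    (hq : u.tg.IsPos π q) :
    ∃ σ', Rel g₁ g₂ σ' π ∧
      ((∃ n : ↥g₁.nodes, g₁.tg.IsPos σ' n ∧ g₁.tg.lab n ≠ none ∧ φ₁ n = q) ∨
       (∃ m : ↥g₂.nodes, g₂.tg.IsPos σ' m ∧ g₂.tg.lab m ≠ none ∧ φ₂ m = q)) := by
  have hdef : DefW g₁ g₂ (rep g₁ g₂ X) := by
    by_contra hc
    exact hnb (labW_eq_none hc)
  have hrp : Rel g₁ g₂ (rep g₁ g₂ X) π := rel_rep_of_cls hX
  rcases hdef with ⟨σ', n, hr, hp, hb⟩ | ⟨σ', m, hr, hp, hb⟩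
  · have hrσ : Rel g₁ g₂ σ' π := hr.trans hrp
    obtain ⟨q₀, hq1, hq2⟩ := rel_u_alias hφ₁ hφ₂ hrσ
    have h1 : q₀ = φ₁ n := isPos_det hq1 (isPos_hom hφ₁.1 hp)
    have h2 : q₀ = q := isPos_det hq2 hq
    exact ⟨σ', hrσ, Or.inl ⟨n, hp, hb, h1 ▸ h2⟩⟩
  · have hrσ : Rel g₁ g₂ σ' π := hr.trans hrp
    obtain ⟨q₀, hq1, hq2⟩ := rel_u_alias hφ₁ hφ₂ hrσ
    have h1 : q₀ = φ₂ m := isPos_det hq1 (isPos_hom hφ₂.1 hp)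
    have h2 : q₀ = q := isPos_det hq2 hq
    exact ⟨σ', hrσ, Or.inr ⟨m, hp, hb, h1 ▸ h2⟩⟩

/-- Two non-`⊥` `v`-nodes over the same `u`-node are equal. -/
theorem vnode_eq {X₁ X₂ : ↥(VNodes g₁ g₂)}
    (hnb₁ : (vtg g₁ g₂).lab X₁ ≠ none) (hnb₂ : (vtg g₁ g₂).lab X₂ ≠ none)
    {π₁ π₂ : List ℕ} (hX₁ : X₁.1 = cls g₁ g₂ π₁) (hX₂ : X₂.1 = cls g₁ g₂ π₂)
    {q : ↥u.nodes} (hq₁ : u.tg.IsPos π₁ q) (hq₂ : u.tg.IsPos π₂ q) :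
    X₁ = X₂ := by
  obtain ⟨σ₁, hr₁, hw₁⟩ := vnode_wit hφ₁ hφ₂ hnb₁ hX₁ hq₁
  obtain ⟨σ₂, hr₂, hw₂⟩ := vnode_wit hφ₁ hφ₂ hnb₂ hX₂ hq₂
  have hσ : Rel g₁ g₂ σ₁ σ₂ := rel_of_common_image hφ₁ hφ₂ hw₁ hw₂
  have : Rel g₁ g₂ π₁ π₂ := (hr₁.symm.trans hσ).trans hr₂
  apply Subtype.ext
  rw [hX₁, hX₂]
  exact cls_eq_of_rel this

theorem phi₁_hom :
    IsDHom ({none} : Set (Option S.Sym)) g₁.tg (vtg g₁ g₂) (Phi₁ g₁ g₂) := by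
  constructor
  · apply Subtype.ext
    exact cls_eq_of_rel (Rel.of₁ (posOf₁_spec g₁ g₁.tg.root) IsPos.root)
  · intro n hmem
    have hnb : g₁.tg.lab n ≠ none := by exact hmem
    exact labW_wit₁ hφ₁ hφ₂ (rel_rep_of_cls rfl).symm (posOf₁_spec g₁ n) hnb
  · intro n hmem i hi hi'
    have hnb : g₁.tg.lab n ≠ none := by exact hmem
    apply Subtype.ext
    show cls g₁ g₂ (posOf₁ g₁ (g₁.tg.suc n ⟨i, hi⟩)) =
      cls g₁ g₂ (rep g₁ g₂ (Phi₁ g₁ g₂ n) ++ [i])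
    have h1 : Rel g₁ g₂ (posOf₁ g₁ (g₁.tg.suc n ⟨i, hi⟩)) (posOf₁ g₁ n ++ [i]) :=
      Rel.of₁ (posOf₁_spec g₁ _) ((posOf₁_spec g₁ n).step ⟨i, hi⟩)
    have h2 : Rel g₁ g₂ (posOf₁ g₁ n ++ [i])
        (rep g₁ g₂ (Phi₁ g₁ g₂ n) ++ [i]) :=
      Rel.suc₁ (rel_rep_of_cls rfl).symm
        (Rel.of₁ (posOf₁_spec g₁ n) (posOf₁_spec g₁ n)) (posOf₁_spec g₁ n)
        hnb hi
    exact cls_eq_of_rel (h1.trans h2)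

theorem phi₁_rigid :
    IsRigid ({none} : Set (Option S.Sym)) g₁.tg (vtg g₁ g₂) (Phi₁ g₁ g₂) := by
  intro n hmem
  have hnb : g₁.tg.lab n ≠ none := by exact hmem
  have hpa_u : g₁.tg.nodePosAcy n = u.tg.nodePosAcy (φ₁ n) := hφ₁.2 n hmem
  have hlabΦ : (vtg g₁ g₂).lab (Phi₁ g₁ g₂ n) = g₁.tg.lab n :=
    (phi₁_hom hφ₁ hφ₂).lab_eq n hmem
  ext π'
  constructor
  · rintro ⟨hp, hacy⟩
    have hposv : (vtg g₁ g₂).IsPos π' (Phi₁ g₁ g₂ n) :=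
      (isPos_vtg hφ₁ hφ₂).2 ⟨Rel.of₁ hp hp,
        cls_eq_of_rel (Rel.of₁ (posOf₁_spec g₁ n) hp)⟩
    refine ⟨hposv, ?_⟩
    intro π₁ π₂ Y h12 h2π hY1 hY2
    obtain ⟨hrel₁, hcls₁⟩ := (isPos_vtg hφ₁ hφ₂).1 hY1
    obtain ⟨hrel₂, hcls₂⟩ := (isPos_vtg hφ₁ hφ₂).1 hY2
    have hr12 : Rel g₁ g₂ π₁ π₂ :=
      (rel_of_cls_eq hrel₁ (hcls₁.symm.trans hcls₂)).symm
    obtain ⟨ρ₂, hρ₂⟩ := id h2π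
    obtain ⟨t, ht⟩ := id h12
    have hp2 : ∃ a₂, g₁.tg.IsPos π₂ a₂ :=
      isPos_append_exists (hρ₂ ▸ hp)
    obtain ⟨a₂, ha₂⟩ := hp2
    have hp' : g₁.tg.IsPos (π₁ ++ (t ++ ρ₂)) n := by
      rw [← List.append_assoc, ht, hρ₂]
      exact hp
    obtain ⟨a₁, ha₁⟩ := isPos_append_exists hp'
    -- both nodes are non-⊥
    have hb₂ : g₁.tg.lab a₂ ≠ none := by
      rcases eq_or_ne ρ₂ [] with h0 | h0
      · have : π₂ = π' := by rw [← hρ₂, h0, List.append_nil]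
        subst this
        rw [isPos_det ha₂ hp]; exact hnb
      · exact lab_ne_none_of_strict_prefix h0 (hρ₂ ▸ hp) ha₂
    have hb₁ : g₁.tg.lab a₁ ≠ none := by
      rcases eq_or_ne (t ++ ρ₂) [] with h0 | h0
      · have : π₁ = π' := by
          rw [← hρ₂, ← ht, List.append_assoc, h0, List.append_nil]
        subst this
        rw [isPos_det ha₁ hp]; exact hnb
      · exact lab_ne_none_of_strict_prefix h0 hp' ha₁
    -- equal images in u
    obtain ⟨q, hq1, hq2⟩ := rel_u_alias hφ₁ hφ₂ hr12
    have he1 : φ₁ a₁ = q := isPos_det (isPos_hom hφ₁.1 ha₁) hq1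
    have he2 : φ₁ a₂ = q := isPos_det (isPos_hom hφ₁.1 ha₂) hq2
    have haa : a₁ = a₂ :=
      rigid_inj hφ₁ hb₁ hb₂ (he1.trans he2.symm) ⟨π₁, ha₁⟩
    exact hacy π₁ π₂ a₁ h12 h2π ha₁ (haa ▸ ha₂)
  · rintro ⟨hp, hacy⟩
    obtain ⟨hrel, hcls⟩ := (isPos_vtg hφ₁ hφ₂).1 hp
    have hce : cls g₁ g₂ (posOf₁ g₁ n) = cls g₁ g₂ π' := hcls
    have hrn : Rel g₁ g₂ (posOf₁ g₁ n) π' :=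
      (rel_of_cls_eq (Rel.of₁ (posOf₁_spec g₁ n) (posOf₁_spec g₁ n)) hce).symm
    obtain ⟨q, hq1, hq2⟩ := rel_u_alias hφ₁ hφ₂ hrn
    have hqn : q = φ₁ n := isPos_det hq1 (isPos_hom hφ₁.1 (posOf₁_spec g₁ n))
    rw [hqn] at hq2
    have hacy_u : u.tg.IsAcyclicPos π' := by
      intro π₁ π₂ q' h12 h2π hq₁' hq₂'
      obtain ⟨ρ₂, hρ₂⟩ := id h2π
      obtain ⟨t, ht⟩ := id h12
      have hpρ : (vtg g₁ g₂).IsPos (π₂ ++ ρ₂) (Phi₁ g₁ g₂ n) := hρ₂ ▸ hp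
      obtain ⟨X₂, hX₂⟩ := isPos_append_exists hpρ
      have hp'' : (vtg g₁ g₂).IsPos (π₁ ++ (t ++ ρ₂)) (Phi₁ g₁ g₂ n) := by
        rw [← List.append_assoc, ht, hρ₂]; exact hp
      obtain ⟨X₁, hX₁⟩ := isPos_append_exists hp''
      have hnb₂ : (vtg g₁ g₂).lab X₂ ≠ none := by
        rcases eq_or_ne ρ₂ [] with h0 | h0
        · have he : π₂ = π' := by rw [← hρ₂, h0, List.append_nil]
          subst he
          rw [isPos_det hX₂ hp, hlabΦ]; exact hnb
        · exact lab_ne_none_of_strict_prefix h0 hpρ hX₂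
      have hnb₁ : (vtg g₁ g₂).lab X₁ ≠ none := by
        rcases eq_or_ne (t ++ ρ₂) [] with h0 | h0
        · have he : π₁ = π' := by
            rw [← hρ₂, ← ht, List.append_assoc, h0, List.append_nil]
          subst he
          rw [isPos_det hX₁ hp, hlabΦ]; exact hnb
        · exact lab_ne_none_of_strict_prefix h0 hp'' hX₁
      obtain ⟨hr₁, hc₁⟩ := (isPos_vtg hφ₁ hφ₂).1 hX₁
      obtain ⟨hr₂, hc₂⟩ := (isPos_vtg hφ₁ hφ₂).1 hX₂
      have hXX : X₁ = X₂ := vnode_eq hφ₁ hφ₂ hnb₁ hnb₂ hc₁ hc₂ hq₁' hq₂'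
      exact hacy π₁ π₂ X₁ h12 h2π hX₁ (hXX ▸ hX₂)
    have hm : π' ∈ u.tg.nodePosAcy (φ₁ n) := ⟨hq2, hacy_u⟩
    rw [← hpa_u] at hm
    exact hm
theorem phi₂_hom :
    IsDHom ({none} : Set (Option S.Sym)) g₂.tg (vtg g₁ g₂) (Phi₂ g₁ g₂) := by
  constructor
  · apply Subtype.ext
    exact cls_eq_of_rel (Rel.of₂ (posOf₂_spec g₂ g₂.tg.root) IsPos.root)
  · intro n hmem
    have hnb : g₂.tg.lab n ≠ none := by exact hmem
    exact labW_wit₂ hφ₁ hφ₂ (rel_rep_of_cls rfl).symm (posOf₂_spec g₂ n) hnb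
  · intro n hmem i hi hi'
    have hnb : g₂.tg.lab n ≠ none := by exact hmem
    apply Subtype.ext
    show cls g₁ g₂ (posOf₂ g₂ (g₂.tg.suc n ⟨i, hi⟩)) =
      cls g₁ g₂ (rep g₁ g₂ (Phi₂ g₁ g₂ n) ++ [i])
    have h1 : Rel g₁ g₂ (posOf₂ g₂ (g₂.tg.suc n ⟨i, hi⟩)) (posOf₂ g₂ n ++ [i]) :=
      Rel.of₂ (posOf₂_spec g₂ _) ((posOf₂_spec g₂ n).step ⟨i, hi⟩)
    have h2 : Rel g₁ g₂ (posOf₂ g₂ n ++ [i])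
        (rep g₁ g₂ (Phi₂ g₁ g₂ n) ++ [i]) :=
      Rel.suc₂ (rel_rep_of_cls rfl).symm
        (Rel.of₂ (posOf₂_spec g₂ n) (posOf₂_spec g₂ n)) (posOf₂_spec g₂ n)
        hnb hi
    exact cls_eq_of_rel (h1.trans h2)

theorem phi₂_rigid :
    IsRigid ({none} : Set (Option S.Sym)) g₂.tg (vtg g₁ g₂) (Phi₂ g₁ g₂) := by
  intro n hmem
  have hnb : g₂.tg.lab n ≠ none := by exact hmem
  have hpa_u : g₂.tg.nodePosAcy n = u.tg.nodePosAcy (φ₂ n) := hφ₂.2 n hmem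
  have hlabΦ : (vtg g₁ g₂).lab (Phi₂ g₁ g₂ n) = g₂.tg.lab n :=
    (phi₂_hom hφ₁ hφ₂).lab_eq n hmem
  ext π'
  constructor
  · rintro ⟨hp, hacy⟩
    have hposv : (vtg g₁ g₂).IsPos π' (Phi₂ g₁ g₂ n) :=
      (isPos_vtg hφ₁ hφ₂).2 ⟨Rel.of₂ hp hp,
        cls_eq_of_rel (Rel.of₂ (posOf₂_spec g₂ n) hp)⟩
    refine ⟨hposv, ?_⟩
    intro π₁ π₂ Y h12 h2π hY1 hY2
    obtain ⟨hrel₁, hcls₁⟩ := (isPos_vtg hφ₁ hφ₂).1 hY1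
    obtain ⟨hrel₂, hcls₂⟩ := (isPos_vtg hφ₁ hφ₂).1 hY2
    have hr12 : Rel g₁ g₂ π₁ π₂ :=
      (rel_of_cls_eq hrel₁ (hcls₁.symm.trans hcls₂)).symm
    obtain ⟨ρ₂, hρ₂⟩ := id h2π
    obtain ⟨t, ht⟩ := id h12
    have hp2 : ∃ a₂, g₂.tg.IsPos π₂ a₂ :=
      isPos_append_exists (hρ₂ ▸ hp)
    obtain ⟨a₂, ha₂⟩ := hp2
    have hp' : g₂.tg.IsPos (π₁ ++ (t ++ ρ₂)) n := by
      rw [← List.append_assoc, ht, hρ₂]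
      exact hp
    obtain ⟨a₁, ha₁⟩ := isPos_append_exists hp'
    -- both nodes are non-⊥
    have hb₂ : g₂.tg.lab a₂ ≠ none := by
      rcases eq_or_ne ρ₂ [] with h0 | h0
      · have : π₂ = π' := by rw [← hρ₂, h0, List.append_nil]
        subst this
        rw [isPos_det ha₂ hp]; exact hnb
      · exact lab_ne_none_of_strict_prefix h0 (hρ₂ ▸ hp) ha₂
    have hb₁ : g₂.tg.lab a₁ ≠ none := by
      rcases eq_or_ne (t ++ ρ₂) [] with h0 | h0
      · have : π₁ = π' := by
          rw [← hρ₂, ← ht, List.append_assoc, h0, List.append_nil]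
        subst this
        rw [isPos_det ha₁ hp]; exact hnb
      · exact lab_ne_none_of_strict_prefix h0 hp' ha₁
    -- equal images in u
    obtain ⟨q, hq1, hq2⟩ := rel_u_alias hφ₁ hφ₂ hr12
    have he1 : φ₂ a₁ = q := isPos_det (isPos_hom hφ₂.1 ha₁) hq1
    have he2 : φ₂ a₂ = q := isPos_det (isPos_hom hφ₂.1 ha₂) hq2
    have haa : a₁ = a₂ :=
      rigid_inj hφ₂ hb₁ hb₂ (he1.trans he2.symm) ⟨π₁, ha₁⟩
    exact hacy π₁ π₂ a₁ h12 h2π ha₁ (haa ▸ ha₂)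
  · rintro ⟨hp, hacy⟩
    obtain ⟨hrel, hcls⟩ := (isPos_vtg hφ₁ hφ₂).1 hp
    have hce : cls g₁ g₂ (posOf₂ g₂ n) = cls g₁ g₂ π' := hcls
    have hrn : Rel g₁ g₂ (posOf₂ g₂ n) π' :=
      (rel_of_cls_eq (Rel.of₂ (posOf₂_spec g₂ n) (posOf₂_spec g₂ n)) hce).symm
    obtain ⟨q, hq1, hq2⟩ := rel_u_alias hφ₁ hφ₂ hrn
    have hqn : q = φ₂ n := isPos_det hq1 (isPos_hom hφ₂.1 (posOf₂_spec g₂ n))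
    rw [hqn] at hq2
    have hacy_u : u.tg.IsAcyclicPos π' := by
      intro π₁ π₂ q' h12 h2π hq₁' hq₂'
      obtain ⟨ρ₂, hρ₂⟩ := id h2π
      obtain ⟨t, ht⟩ := id h12
      have hpρ : (vtg g₁ g₂).IsPos (π₂ ++ ρ₂) (Phi₂ g₁ g₂ n) := hρ₂ ▸ hp
      obtain ⟨X₂, hX₂⟩ := isPos_append_exists hpρ
      have hp'' : (vtg g₁ g₂).IsPos (π₁ ++ (t ++ ρ₂)) (Phi₂ g₁ g₂ n) := by
        rw [← List.append_assoc, ht, hρ₂]; exact hp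
      obtain ⟨X₁, hX₁⟩ := isPos_append_exists hp''
      have hnb₂ : (vtg g₁ g₂).lab X₂ ≠ none := by
        rcases eq_or_ne ρ₂ [] with h0 | h0
        · have he : π₂ = π' := by rw [← hρ₂, h0, List.append_nil]
          subst he
          rw [isPos_det hX₂ hp, hlabΦ]; exact hnb
        · exact lab_ne_none_of_strict_prefix h0 hpρ hX₂
      have hnb₁ : (vtg g₁ g₂).lab X₁ ≠ none := by
        rcases eq_or_ne (t ++ ρ₂) [] with h0 | h0
        · have he : π₁ = π' := by
            rw [← hρ₂, ← ht, List.append_assoc, h0, List.append_nil]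
          subst he
          rw [isPos_det hX₁ hp, hlabΦ]; exact hnb
        · exact lab_ne_none_of_strict_prefix h0 hp'' hX₁
      obtain ⟨hr₁, hc₁⟩ := (isPos_vtg hφ₁ hφ₂).1 hX₁
      obtain ⟨hr₂, hc₂⟩ := (isPos_vtg hφ₁ hφ₂).1 hX₂
      have hXX : X₁ = X₂ := vnode_eq hφ₁ hφ₂ hnb₁ hnb₂ hc₁ hc₂ hq₁' hq₂'
      exact hacy π₁ π₂ X₁ h12 h2π hX₁ (hXX ▸ hX₂)
    have hm : π' ∈ u.tg.nodePosAcy (φ₂ n) := ⟨hq2, hacy_u⟩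
    rw [← hpa_u] at hm
    exact hm
end PhiHom
end TGR
namespace TGR
open TermGraph

variable {S : Signature} {g₁ g₂ u w : CTG S.bot}
  {φ₁ : ↥g₁.nodes → ↥u.nodes} {φ₂ : ↥g₂.nodes → ↥u.nodes}
  {ψ₁ : ↥g₁.nodes → ↥w.nodes} {ψ₂ : ↥g₂.nodes → ↥w.nodes}

section Least

variable (hφ₁ : IsRigidBotHom g₁.tg u.tg φ₁) (hφ₂ : IsRigidBotHom g₂.tg u.tg φ₂)
  (hψ₁ : IsRigidBotHom g₁.tg w.tg ψ₁) (hψ₂ : IsRigidBotHom g₂.tg w.tg ψ₂)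

/-- The mediating map into an arbitrary upper bound. -/
noncomputable def chi (hψ₁ : IsRigidBotHom g₁.tg w.tg ψ₁)
    (hψ₂ : IsRigidBotHom g₂.tg w.tg ψ₂) (X : ↥(VNodes g₁ g₂)) : ↥w.nodes :=
  (Rel.aliases hψ₁.1 hψ₂.1 (rep_spec g₁ g₂ X).1).choose

include hψ₁ hψ₂

theorem chi_spec (X : ↥(VNodes g₁ g₂)) :
    w.tg.IsPos (rep g₁ g₂ X) (chi hψ₁ hψ₂ X) :=
  (Rel.aliases hψ₁.1 hψ₂.1 (rep_spec g₁ g₂ X).1).choose_spec.1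

theorem chi_at {X : ↥(VNodes g₁ g₂)} {π : List ℕ}
    (hX : X.1 = cls g₁ g₂ π) : w.tg.IsPos π (chi hψ₁ hψ₂ X) := by
  obtain ⟨q, hq1, hq2⟩ := Rel.aliases hψ₁.1 hψ₂.1 (rel_rep_of_cls hX)
  have : q = chi hψ₁ hψ₂ X := isPos_det hq1 (chi_spec hψ₁ hψ₂ X)
  exact this ▸ hq2

theorem chi_wit₁ {X : ↥(VNodes g₁ g₂)} {σ' : List ℕ} {n : ↥g₁.nodes}
    (hr : Rel g₁ g₂ σ' (rep g₁ g₂ X)) (hp : g₁.tg.IsPos σ' n) :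
    chi hψ₁ hψ₂ X = ψ₁ n := by
  obtain ⟨q, hq1, hq2⟩ := Rel.aliases hψ₁.1 hψ₂.1 hr
  have h1 : q = ψ₁ n := isPos_det hq1 (isPos_hom hψ₁.1 hp)
  have h2 : q = chi hψ₁ hψ₂ X := isPos_det hq2 (chi_spec hψ₁ hψ₂ X)
  rw [← h1, ← h2]

theorem chi_wit₂ {X : ↥(VNodes g₁ g₂)} {σ' : List ℕ} {n : ↥g₂.nodes}
    (hr : Rel g₁ g₂ σ' (rep g₁ g₂ X)) (hp : g₂.tg.IsPos σ' n) :
    chi hψ₁ hψ₂ X = ψ₂ n := by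
  obtain ⟨q, hq1, hq2⟩ := Rel.aliases hψ₁.1 hψ₂.1 hr
  have h1 : q = ψ₂ n := isPos_det hq1 (isPos_hom hψ₂.1 hp)
  have h2 : q = chi hψ₁ hψ₂ X := isPos_det hq2 (chi_spec hψ₁ hψ₂ X)
  rw [← h1, ← h2]

include hφ₁ hφ₂

theorem chi_hom :
    IsDHom ({none} : Set (Option S.Sym)) (vtg g₁ g₂) w.tg (chi hψ₁ hψ₂) := by
  constructor
  · have h0 : w.tg.IsPos [] (chi hψ₁ hψ₂ (vtg g₁ g₂).root) :=
      chi_at hψ₁ hψ₂ rfl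
    exact isPos_nil h0 rfl
  · intro X hmem
    have hnb : (vtg g₁ g₂).lab X ≠ none := by
      exact hmem
    have hdef : DefW g₁ g₂ (rep g₁ g₂ X) := by
      by_contra hc; exact hnb (labW_eq_none hc)
    rcases hdef with ⟨σ', n, hr, hp, hb⟩ | ⟨σ', n, hr, hp, hb⟩
    · rw [chi_wit₁ hψ₁ hψ₂ hr hp]
      rw [hψ₁.1.lab_eq n (by exact hb)]
      exact (labW_wit₁ hφ₁ hφ₂ hr hp hb).symm
    · rw [chi_wit₂ hψ₁ hψ₂ hr hp]
      rw [hψ₂.1.lab_eq n (by exact hb)]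
      exact (labW_wit₂ hφ₁ hφ₂ hr hp hb).symm
  · intro X hmem i hi hi'
    have hs : w.tg.IsPos (rep g₁ g₂ X ++ [i])
        (chi hψ₁ hψ₂ ((vtg g₁ g₂).suc X ⟨i, hi⟩)) := chi_at hψ₁ hψ₂ rfl
    have hstep := (chi_spec hψ₁ hψ₂ X).step ⟨i, hi'⟩
    exact isPos_det hs hstep

theorem chi_rigid :
    IsRigid ({none} : Set (Option S.Sym)) (vtg g₁ g₂) w.tg (chi hψ₁ hψ₂) := by
  intro X hmem
  have hnb : (vtg g₁ g₂).lab X ≠ none := by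
    exact hmem
  have hdef : DefW g₁ g₂ (rep g₁ g₂ X) := by
    by_contra hc; exact hnb (labW_eq_none hc)
  rcases hdef with ⟨σ', n, hr, hp, hb⟩ | ⟨σ', n, hr, hp, hb⟩
  · have hXphi : Phi₁ g₁ g₂ n = X := by
      apply Subtype.ext
      rw [(rep_spec g₁ g₂ X).2]
      exact cls_eq_of_rel ((Rel.of₁ (posOf₁_spec g₁ n) hp).trans hr)
    have hb' : g₁.tg.lab n ∉ ({none} : Set (Option S.Sym)) := by
      exact hb
    rw [chi_wit₁ hψ₁ hψ₂ hr hp, ← hψ₁.2 n hb', ← hXphi,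
      ← phi₁_rigid hφ₁ hφ₂ n hb']
  · have hXphi : Phi₂ g₁ g₂ n = X := by
      apply Subtype.ext
      rw [(rep_spec g₁ g₂ X).2]
      exact cls_eq_of_rel ((Rel.of₂ (posOf₂_spec g₂ n) hp).trans hr)
    have hb' : g₂.tg.lab n ∉ ({none} : Set (Option S.Sym)) := by
      exact hb
    rw [chi_wit₂ hψ₁ hψ₂ hr hp, ← hψ₂.2 n hb', ← hXphi,
      ← phi₂_rigid hφ₁ hφ₂ n hb']

end Least
end TGR
namespace TGR

/-- Every pair of compatible canonical partial term graphs
(i.e. a pair having an upper bound w.r.t. `≤⊥r`) has a least upper bound. -/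
theorem compatible_have_lub (S : Signature) (g₁ g₂ u : CTG S.bot)
    (h₁ : CTG.LeR g₁ u) (h₂ : CTG.LeR g₂ u) :
    ∃ v, CTG.IsLubR {g₁, g₂} v := by
  obtain ⟨φ₁, hφ₁⟩ := h₁
  obtain ⟨φ₂, hφ₂⟩ := h₂
  refine ⟨vCTG hφ₁ hφ₂, ?_, ?_⟩
  · intro g hg
    rcases hg with hg | hg
    · rw [hg]
      exact ⟨Phi₁ g₁ g₂, phi₁_hom hφ₁ hφ₂, phi₁_rigid hφ₁ hφ₂⟩
    · rw [Set.mem_singleton_iff] at hg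
      rw [hg]
      exact ⟨Phi₂ g₁ g₂, phi₂_hom hφ₁ hφ₂, phi₂_rigid hφ₁ hφ₂⟩
  · intro w hw
    obtain ⟨ψ₁, hψ₁⟩ := hw g₁ (Set.mem_insert _ _)
    obtain ⟨ψ₂, hψ₂⟩ := hw g₂ (Set.mem_insert_of_mem _ rfl)
    exact ⟨chi hψ₁ hψ₂, chi_hom hφ₁ hφ₂ hψ₁ hψ₂, chi_rigid hφ₁ hφ₂ hψ₁ hψ₂⟩

end TGR
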